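/- First-order perturbation of a projection: let B(t) be a differentiable matrix-valued function of a real parameter with B(t₀) of full column rank, and let P(t) be the orthogonal projection onto the column space of B(t). Then P'(t₀) = P⊥ B' B⁺ + (P⊥ B' B⁺)ᴴ, where P⊥ = I − P(t₀) and B⁺ = (BᴴB)⁻¹Bᴴ evaluated at t₀. -/

import Mathlib

open Matrix

lemma aux_diffAt_det {n : Type*} [Fintype n] [DecidableEq n]
    (M : ℝ → Matrix n n ℂ) (t₀ : ℝ)
    (h : ∀ i j, DifferentiableAt ℝ (fun t => M t i j) t₀) :
    DifferentiableAt ℝ (fun t => (M t).det) t₀ := by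
  simp only [Matrix.det_apply']
  exact DifferentiableAt.fun_sum fun σ _ =>
    (DifferentiableAt.fun_finsetProd fun i _ => h (σ i) i).const_mul _

lemma aux_diffAt_adjugate {n : Type*} [Fintype n] [DecidableEq n]
    (M : ℝ → Matrix n n ℂ) (t₀ : ℝ)
    (h : ∀ i j, DifferentiableAt ℝ (fun t => M t i j) t₀) (i j : n) :
    DifferentiableAt ℝ (fun t => (M t).adjugate i j) t₀ := by
  simp only [Matrix.adjugate_apply]
  apply aux_diffAt_det
  intro i' j'
  by_cases h' : i' = j
  · simp [h', Matrix.updateRow_apply]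
  · simpa [h', Matrix.updateRow_apply] using h i' j'

lemma aux_hasDerivAt_matmul {m n p : Type*} [Fintype n]
    (A : ℝ → Matrix m n ℂ) (A' : Matrix m n ℂ)
    (C : ℝ → Matrix n p ℂ) (C' : Matrix n p ℂ) (t₀ : ℝ)
    (hA : ∀ i j, HasDerivAt (fun t => A t i j) (A' i j) t₀)
    (hC : ∀ i j, HasDerivAt (fun t => C t i j) (C' i j) t₀) :
    ∀ i j, HasDerivAt (fun t => (A t * C t) i j)
      ((A' * C t₀ + A t₀ * C') i j) t₀ := by
  intro i j
  have h : HasDerivAt (fun t => ∑ k, A t i k * C t k j)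
      (∑ k, (A' i k * C t₀ k j + A t₀ i k * C' k j)) t₀ :=
    HasDerivAt.fun_sum fun k _ => (hA i k).mul (hC k j)
  have e1 : (fun t => (A t * C t) i j) = fun t => ∑ k, A t i k * C t k j := by
    funext t; simp [Matrix.mul_apply]
  rw [e1]
  convert h using 1
  simp [Matrix.add_apply, Matrix.mul_apply, Finset.sum_add_distrib]

theorem stmt10 (N L : ℕ) (B : ℝ → Matrix (Fin N) (Fin L) ℂ)
    (B' : Matrix (Fin N) (Fin L) ℂ) (t₀ : ℝ)
    (hderiv : ∀ i j, HasDerivAt (fun t => B t i j) (B' i j) t₀)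
    (hrank : (B t₀).rank = L)
    (P : ℝ → Matrix (Fin N) (Fin N) ℂ)
    (hP : ∀ t, P t = B t * ((B t)ᴴ * B t)⁻¹ * (B t)ᴴ)
    (Bplus : Matrix (Fin L) (Fin N) ℂ)
    (hBplus : Bplus = ((B t₀)ᴴ * B t₀)⁻¹ * (B t₀)ᴴ)
    (Pperp : Matrix (Fin N) (Fin N) ℂ) (hPperp : Pperp = 1 - P t₀) :
    ∀ i j, HasDerivAt (fun t => P t i j)
      ((Pperp * B' * Bplus + (Pperp * B' * Bplus)ᴴ) i j) t₀ := by
  classical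
  set M : Matrix (Fin N) (Fin L) ℂ := B t₀ with hM
  set G : ℝ → Matrix (Fin L) (Fin L) ℂ := fun t => (B t)ᴴ * B t with hGdef
  set G' : Matrix (Fin L) (Fin L) ℂ := B'ᴴ * M + Mᴴ * B' with hG'def
  -- conjTranspose derivatives
  have hderivH : ∀ i j, HasDerivAt (fun t => (B t)ᴴ i j) (B'ᴴ i j) t₀ := by
    intro i j
    simpa [Matrix.conjTranspose_apply] using (hderiv j i).star
  -- derivative of G
  have hG : ∀ i j, HasDerivAt (fun t => G t i j) (G' i j) t₀ :=
    aux_hasDerivAt_matmul (fun t => (B t)ᴴ) B'ᴴ B B' t₀ hderivH hderiv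
  have hGdiff : ∀ i j, DifferentiableAt ℝ (fun t => G t i j) t₀ :=
    fun i j => (hG i j).differentiableAt
  -- G t₀ is a unit
  have hunit : IsUnit (G t₀) := by
    rw [← Matrix.mulVec_surjective_iff_isUnit]
    have hr : (G t₀).rank = Fintype.card (Fin L) := by
      simp only [hGdef]
      open scoped ComplexOrder in
      rw [Matrix.rank_conjTranspose_mul_self, hrank, Fintype.card_fin]
    have htop : LinearMap.range (G t₀).mulVecLin = ⊤ := by
      apply Submodule.eq_top_of_finrank_eq
      rw [← Matrix.rank, hr, Module.finrank_fintype_fun_eq_card]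
    intro v
    obtain ⟨w, hw⟩ := LinearMap.range_eq_top.mp htop v
    exact ⟨w, by simpa using hw⟩
  have hdetunit : IsUnit (G t₀).det := (Matrix.isUnit_iff_isUnit_det _).mp hunit
  have hdetne : (G t₀).det ≠ 0 := by
    simpa [isUnit_iff_ne_zero] using hdetunit
  -- F = G⁻¹ entrywise differentiable
  set F : ℝ → Matrix (Fin L) (Fin L) ℂ := fun t => (G t)⁻¹ with hFdef
  have hdetdiff : DifferentiableAt ℝ (fun t => (G t).det) t₀ :=
    aux_diffAt_det G t₀ hGdiff
  have hFdiff : ∀ i j, DifferentiableAt ℝ (fun t => F t i j) t₀ := by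
    intro i j
    have e : (fun t => F t i j) = fun t => ((G t).det)⁻¹ * (G t).adjugate i j := by
      funext t
      simp [hFdef, Matrix.inv_def, Matrix.smul_apply, Ring.inverse_eq_inv', smul_eq_mul]
    rw [e]
    exact ((hdetdiff.inv hdetne).mul (aux_diffAt_adjugate G t₀ hGdiff i j))
  set F' : Matrix (Fin L) (Fin L) ℂ :=
    Matrix.of fun i j => deriv (fun t => F t i j) t₀ with hF'def
  have hF : ∀ i j, HasDerivAt (fun t => F t i j) (F' i j) t₀ :=
    fun i j => (hFdiff i j).hasDerivAt
  -- eventually G t * F t = 1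
  have hev : ∀ᶠ t in nhds t₀, G t * F t = 1 := by
    have : ∀ᶠ t in nhds t₀, (G t).det ≠ 0 :=
      hdetdiff.continuousAt.eventually_ne hdetne
    filter_upwards [this] with t ht
    exact Matrix.mul_nonsing_inv _ (isUnit_iff_ne_zero.mpr ht)
  -- derivative of G * F is zero
  have hGF : ∀ i j, HasDerivAt (fun t => (G t * F t) i j)
      ((G' * F t₀ + G t₀ * F') i j) t₀ :=
    aux_hasDerivAt_matmul G G' F F' t₀ hG hF
  have hzero : G' * F t₀ + G t₀ * F' = 0 := by
    ext i j
    have h0 : HasDerivAt (fun t => (G t * F t) i j) 0 t₀ := by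
      apply (hasDerivAt_const t₀ ((1 : Matrix (Fin L) (Fin L) ℂ) i j)).congr_of_eventuallyEq
      filter_upwards [hev] with t ht
      rw [ht]
    simpa using (hGF i j).unique h0
  -- solve for F'
  have hFG : F t₀ * G t₀ = 1 := Matrix.nonsing_inv_mul _ hdetunit
  have hF'eq : F' = -(F t₀ * G' * F t₀) := by
    have h1 : G t₀ * F' = -(G' * F t₀) := by
      rw [eq_neg_iff_add_eq_zero, add_comm]; exact hzero
    calc F' = (F t₀ * G t₀) * F' := by rw [hFG, one_mul]
    _ = F t₀ * (G t₀ * F') := by rw [Matrix.mul_assoc]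
    _ = F t₀ * -(G' * F t₀) := by rw [h1]
    _ = -(F t₀ * G' * F t₀) := by rw [Matrix.mul_neg, Matrix.mul_assoc]
  -- derivative of P
  have hBF : ∀ i j, HasDerivAt (fun t => (B t * F t) i j)
      ((B' * F t₀ + M * F') i j) t₀ :=
    aux_hasDerivAt_matmul B B' F F' t₀ hderiv hF
  have hPfull : ∀ i j, HasDerivAt (fun t => ((B t * F t) * (B t)ᴴ) i j)
      (((B' * F t₀ + M * F') * Mᴴ + (M * F t₀) * B'ᴴ) i j) t₀ :=
    aux_hasDerivAt_matmul (fun t => B t * F t) (B' * F t₀ + M * F')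
      (fun t => (B t)ᴴ) B'ᴴ t₀ hBF hderivH
  have hGH : (G t₀)ᴴ = G t₀ := by
    simp [hGdef, Matrix.conjTranspose_mul]
  have hFH : (F t₀)ᴴ = F t₀ := by
    rw [hFdef]
    simp only []
    rw [Matrix.conjTranspose_nonsing_inv, hGH]
  have hBplus' : Bplus = F t₀ * Mᴴ := by rw [hBplus]
  have hPt0 : P t₀ = M * F t₀ * Mᴴ := by rw [hP t₀]
  have hconj : ((1 - M * F t₀ * Mᴴ) * B' * (F t₀ * Mᴴ))ᴴ
      = M * F t₀ * B'ᴴ * (1 - M * F t₀ * Mᴴ) := by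
    simp only [Matrix.conjTranspose_mul, Matrix.conjTranspose_sub,
      Matrix.conjTranspose_one, Matrix.conjTranspose_conjTranspose, hFH,
      Matrix.mul_assoc]
  have key : Pperp * B' * Bplus + (Pperp * B' * Bplus)ᴴ
      = (B' * F t₀ + M * F') * Mᴴ + (M * F t₀) * B'ᴴ := by
    rw [hPperp, hBplus', hPt0, hconj, hF'eq, hG'def]
    simp only [Matrix.mul_neg, Matrix.neg_mul, Matrix.sub_mul, Matrix.mul_sub,
      Matrix.one_mul, Matrix.mul_one, Matrix.mul_add, Matrix.add_mul,
      Matrix.mul_assoc, sub_eq_add_neg, neg_add]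
    abel
  intro i j
  have hPe : (fun t => P t i j) = fun t => ((B t * F t) * (B t)ᴴ) i j := by
    funext t; rw [hP t]
  rw [hPe, key]
  exact hPfull i j
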